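/- Let D = diag(d_1,...,d_n) with distinct d_i, ρ ≠ 0, u ∈ ℝⁿ with all u_i ≠ 0, and let λ_1,...,λ_n be the (distinct) eigenvalues of M = D + ρuuᵀ with λ_j ≠ d_i for all i,j. Define Q̂_{ij} = u_i·v_j/(d_i − λ_j) where v_j = 1/√(∑_{k=1}^{n} u_k²/(d_k − λ_j)²). Then Q̂ is an orthogonal matrix whose j-th column is a unit eigenvector of M corresponding to λ_j, i.e., M·Q̂ = Q̂·diag(λ_1,...,λ_n) and Q̂ᵀQ̂ = I. -/

import Mathlib

open Matrix

private lemma charpoly_eval_aux (n : ℕ) (M : Matrix (Fin n) (Fin n) ℝ) (x : ℝ) :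
    (M.charpoly).eval x = (x • (1 : Matrix (Fin n) (Fin n) ℝ) - M).det := by
  rw [Matrix.charpoly, ← Polynomial.coe_evalRingHom, RingHom.map_det]
  congr 1
  ext i j
  by_cases h : i = j <;>
    simp [h, Matrix.charmatrix_apply, Matrix.one_apply, Matrix.smul_apply]

private lemma secular_aux (n : ℕ) (d u : Fin n → ℝ) (ρ x : ℝ) (hρ : ρ ≠ 0)
    (hx : ∀ i, d i - x ≠ 0)
    (hdet : (Matrix.diagonal d + ρ • Matrix.vecMulVec u u
      - x • (1 : Matrix (Fin n) (Fin n) ℝ)).det = 0) :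
    ∑ k, u k ^ 2 / (d k - x) = -1 / ρ := by
  have key : Matrix.diagonal d + ρ • Matrix.vecMulVec u u - x • (1 : Matrix (Fin n) (Fin n) ℝ)
      = Matrix.diagonal (fun i => d i - x) + replicateCol Unit (ρ • u) * replicateRow Unit u := by
    rw [← vecMulVec_eq]
    ext i j
    by_cases h : i = j <;>
      simp [h, Matrix.diagonal_apply, Matrix.one_apply, Matrix.vecMulVec_apply] <;> ring
  have hunit : IsUnit (Matrix.diagonal (fun i => d i - x)).det := by
    rw [Matrix.det_diagonal]
    exact (Finset.prod_ne_zero_iff.mpr fun i _ => hx i).isUnit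
  have hinv : (Matrix.diagonal fun i => d i - x)⁻¹ = Matrix.diagonal (fun i => (d i - x)⁻¹) := by
    apply Matrix.inv_eq_right_inv
    rw [Matrix.diagonal_mul_diagonal]
    ext i j
    by_cases h : i = j <;> simp [h, Matrix.diagonal_apply, mul_inv_cancel₀ (hx j), Matrix.one_apply]
  rw [key, Matrix.det_add_replicateCol_mul_replicateRow hunit] at hdet
  have h1 : (1 + replicateRow Unit u * (Matrix.diagonal fun i => d i - x)⁻¹ * replicateCol Unit (ρ • u)).det = 0 := by
    rcases mul_eq_zero.mp hdet with h | h
    · exact absurd h hunit.ne_zero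
    · exact h
  rw [Matrix.det_unique, hinv] at h1
  simp only [Matrix.add_apply, Matrix.one_apply_eq, Matrix.mul_apply, Matrix.replicateRow_apply,
    Matrix.replicateCol_apply, Matrix.diagonal_apply, Pi.smul_apply, smul_eq_mul, mul_ite, mul_zero,
    Finset.sum_ite_eq', Finset.mem_univ, if_true] at h1
  have h2 : ρ * ∑ k, u k ^ 2 / (d k - x) = -1 := by
    have e : ∀ k, u k * (d k - x)⁻¹ * (ρ * u k) = ρ * (u k ^ 2 / (d k - x)) := by
      intro k; field_simp
    rw [Finset.mul_sum, ← Finset.sum_congr rfl (fun k _ => e k)]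
    linarith [h1]
  field_simp
  linarith

/-- The normalized Cauchy-like matrix `Q̂ i j = u i v j / (d i - λ j)` with
`v j = 1/√(∑ u_k²/(d_k - λ_j)²)` is the orthogonal eigenvector matrix of
`M = D + ρ u uᵀ`. -/
theorem stmt_13 (n : ℕ) (d u lam : Fin n → ℝ) (ρ : ℝ)
    (hd : Function.Injective d) (hρ : ρ ≠ 0) (hu : ∀ i, u i ≠ 0)
    (hlam : Function.Injective lam)
    (hld : ∀ i j, lam j ≠ d i)
    (M : Matrix (Fin n) (Fin n) ℝ)
    (hM : M = Matrix.diagonal d + ρ • Matrix.vecMulVec u u)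
    (hchar : M.charpoly = ∏ i, (Polynomial.X - Polynomial.C (lam i)))
    (v : Fin n → ℝ)
    (hv : v = fun j => 1 / Real.sqrt (∑ k, u k ^ 2 / (d k - lam j) ^ 2))
    (Q : Matrix (Fin n) (Fin n) ℝ)
    (hQ : Q = Matrix.of fun i j : Fin n => u i * v j / (d i - lam j)) :
    M * Q = Q * Matrix.diagonal lam ∧ Qᵀ * Q = 1 := by
  have hdl : ∀ i j, d i - lam j ≠ 0 := fun i j => sub_ne_zero.mpr (Ne.symm (hld i j))
  -- the secular equation at each eigenvalue
  have secular : ∀ j, ∑ k, u k ^ 2 / (d k - lam j) = -1 / ρ := by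
    intro j
    apply secular_aux n d u ρ (lam j) hρ (fun i => hdl i j)
    have h0 : (M.charpoly).eval (lam j) = 0 := by
      rw [hchar, Polynomial.eval_prod]
      exact Finset.prod_eq_zero (Finset.mem_univ j) (by simp)
    rw [charpoly_eval_aux] at h0
    have : Matrix.diagonal d + ρ • Matrix.vecMulVec u u
        - lam j • (1 : Matrix (Fin n) (Fin n) ℝ)
        = -(lam j • (1 : Matrix (Fin n) (Fin n) ℝ) - M) := by rw [hM, neg_sub]
    rw [this, Matrix.det_neg, h0, mul_zero]
  constructor
  · -- eigenvector equation
    ext i j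
    rw [Matrix.mul_diagonal, Matrix.mul_apply]
    have e : ∀ k, M i k * Q k j
        = Matrix.diagonal d i k * (u k * v j / (d k - lam j))
          + (ρ * u i * v j) * (u k ^ 2 / (d k - lam j)) := by
      intro k
      rw [hM, hQ]
      simp only [Matrix.add_apply, Matrix.smul_apply, Matrix.vecMulVec_apply, smul_eq_mul,
        Matrix.of_apply]
      field_simp
    rw [Finset.sum_congr rfl (fun k _ => e k), Finset.sum_add_distrib, ← Finset.mul_sum,
      secular j]
    have hdiag : ∑ k, Matrix.diagonal d i k * (u k * v j / (d k - lam j))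
        = d i * (u i * v j / (d i - lam j)) := by
      simp [Matrix.diagonal_apply, ite_mul, Finset.sum_ite_eq]
    rw [hdiag, hQ]
    simp only [Matrix.of_apply]
    field_simp [hdl i j]
    ring
  · -- orthogonality
    ext j l
    rw [Matrix.mul_apply]
    simp only [Matrix.transpose_apply]
    by_cases hjl : j = l
    · subst hjl
      have hS : 0 < ∑ k, u k ^ 2 / (d k - lam j) ^ 2 :=
        Finset.sum_pos
          (fun k _ => div_pos (pow_two_pos_of_ne_zero (hu k))
            (pow_two_pos_of_ne_zero (hdl k j)))
          ⟨j, Finset.mem_univ j⟩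
      have e : ∀ i, Q i j * Q i j = v j ^ 2 * (u i ^ 2 / (d i - lam j) ^ 2) := by
        intro i
        rw [hQ]; simp only [Matrix.of_apply]
        field_simp
      rw [Finset.sum_congr rfl (fun i _ => e i), ← Finset.mul_sum]
      have hvj : v j = 1 / Real.sqrt (∑ k, u k ^ 2 / (d k - lam j) ^ 2) := by rw [hv]
      rw [hvj, div_pow, one_pow, Real.sq_sqrt hS.le, one_div, inv_mul_cancel₀ hS.ne',
        Matrix.one_apply_eq]
    · have hll : lam j - lam l ≠ 0 := sub_ne_zero.mpr (fun h => hjl (hlam h))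
      have e : ∀ i, Q i j * Q i l
          = (v j * v l * (lam j - lam l)⁻¹)
            * (u i ^ 2 / (d i - lam j) - u i ^ 2 / (d i - lam l)) := by
        intro i
        rw [hQ]; simp only [Matrix.of_apply]
        field_simp [hdl i j, hdl i l]
        ring
      rw [Finset.sum_congr rfl (fun i _ => e i), ← Finset.mul_sum,
        Finset.sum_sub_distrib, secular j, secular l, sub_self, mul_zero,
        Matrix.one_apply_ne hjl]
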